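/- Let n ≥ 1, let (A,B) ∈ P_{2n}, and let l ∈ [2n−1]. Then Σ_{i=1}^{l} (l+1−i)·|D_{A,B,i}| ≤ c_{2n,l}. -/

import Mathlib

/-- `E_{A,B} = {(min{a,b}, max{a,b}) : a ∈ A, b ∈ B}`. -/
def crossPairs (A B : Finset ℕ) : Finset (ℕ × ℕ) :=
  (A ×ˢ B).image fun p => (min p.1 p.2, max p.1 p.2)

/-- `D_{A,B,i} = {(a,b) ∈ E_{A,B} : b − a = i}`. -/
def distPairs (A B : Finset ℕ) (i : ℕ) : Finset (ℕ × ℕ) :=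
  (crossPairs A B).filter fun p => p.2 - p.1 = i

/-- The constant `c_{2n,l}`: for `l` even, `−l³/12 + (2n−1)l²/4 + (6n−1)l/6`, and for
`l` odd, `−l³/12 + (2n−1)l²/4 + (12n−5)l/12 + (2n−1)/4`. -/
noncomputable def cConst (n l : ℕ) : ℝ :=
  if Even l then
    -(l : ℝ) ^ 3 / 12 + (2 * (n : ℝ) - 1) * (l : ℝ) ^ 2 / 4 + (6 * (n : ℝ) - 1) * (l : ℝ) / 6
  else
    -(l : ℝ) ^ 3 / 12 + (2 * (n : ℝ) - 1) * (l : ℝ) ^ 2 / 4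
      + (12 * (n : ℝ) - 5) * (l : ℝ) / 12 + (2 * (n : ℝ) - 1) / 4

open Finset

private def Ssum (l : ℕ) : ℕ := ∑ k ∈ Finset.Ioc 0 l, k ^ 2 / 4

private lemma Ssum_formula (l : ℕ) :
    24 * Ssum l + 6 * ((l + 1) / 2) = l * (l + 1) * (2 * l + 1) := by
  induction l with
  | zero => simp [Ssum]
  | succ l ih =>
    have hstep : Ssum (l + 1) = Ssum l + (l + 1) ^ 2 / 4 := by
      unfold Ssum
      rw [Finset.sum_Ioc_succ_top (by omega)]
    rw [hstep]
    have key : (l + 1) * (l + 1 + 1) * (2 * (l + 1) + 1)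
        = l * (l + 1) * (2 * l + 1) + 6 * (l + 1) ^ 2 := by ring
    rw [key]
    rcases Nat.even_or_odd (l + 1) with ⟨m, hm⟩ | ⟨m, hm⟩
    · have h1 : (l + 1) ^ 2 = 4 * (m * m) := by rw [hm]; ring
      rw [h1]
      generalize m * m = M
      omega
    · have h1 : (l + 1) ^ 2 = 4 * (m * m + m) + 1 := by rw [hm]; ring
      rw [h1]
      generalize m * m + m = M
      omega

private lemma distPairs_card (A B : Finset ℕ) (hdisj : Disjoint A B) (i : ℕ) :
    (distPairs A B i).card
      = ∑ p ∈ A ×ˢ B, if max p.1 p.2 - min p.1 p.2 = i then 1 else 0 := by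
  have hinj : Set.InjOn (fun p : ℕ × ℕ => (min p.1 p.2, max p.1 p.2)) ↑(A ×ˢ B) := by
    intro p hp q hq h
    simp only [Finset.mem_coe, Finset.mem_product] at hp hq
    have h1 := congrArg Prod.fst h
    have h2 := congrArg Prod.snd h
    simp only at h1 h2
    have d1 : p.1 ≠ p.2 := fun e => Finset.disjoint_left.mp hdisj hp.1 (e ▸ hp.2)
    have d2 : q.1 ≠ q.2 := fun e => Finset.disjoint_left.mp hdisj hq.1 (e ▸ hq.2)
    have d3 : p.1 ≠ q.2 := fun e => Finset.disjoint_left.mp hdisj hp.1 (e ▸ hq.2)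
    have d4 : q.1 ≠ p.2 := fun e => Finset.disjoint_left.mp hdisj hq.1 (e ▸ hp.2)
    have hpq : p.1 = q.1 ∧ p.2 = q.2 := by omega
    exact Prod.ext hpq.1 hpq.2
  unfold distPairs crossPairs
  rw [Finset.filter_image,
    Finset.card_image_of_injOn (hinj.mono (Finset.coe_subset.mpr (Finset.filter_subset _ _))),
    Finset.card_filter]

private lemma inter_card_mul (A B W : Finset ℕ) :
    (A ∩ W).card * (B ∩ W).card
      = ∑ p ∈ A ×ˢ B, if p.1 ∈ W ∧ p.2 ∈ W then 1 else 0 := by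
  have h : (A ∩ W) ×ˢ (B ∩ W) = (A ×ˢ B).filter (fun p => p.1 ∈ W ∧ p.2 ∈ W) := by
    ext p
    simp only [Finset.mem_product, Finset.mem_filter, Finset.mem_inter]
    tauto
  rw [← Finset.card_product, h, Finset.card_filter]

private lemma pair_count (N l a b : ℕ) (ha1 : 1 ≤ a) (ha2 : a ≤ N)
    (hb1 : 1 ≤ b) (hb2 : b ≤ N) (hab : a ≠ b) :
    (∑ i ∈ Icc 1 l, (l + 1 - i) * (if max a b - min a b = i then 1 else 0))
      = ((Icc 1 (N + l)).filter
          fun u => a ∈ Icc (u - l) u ∧ b ∈ Icc (u - l) u).card := by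
  have hfil : ((Icc 1 (N + l)).filter
      fun u => a ∈ Icc (u - l) u ∧ b ∈ Icc (u - l) u)
      = Icc (max a b) (min a b + l) := by
    ext u
    simp only [Finset.mem_filter, Finset.mem_Icc]
    omega
  rw [hfil, Nat.card_Icc]
  simp only [mul_ite, mul_one, mul_zero]
  rw [Finset.sum_ite_eq]
  by_cases hd : max a b - min a b ∈ Icc 1 l
  · rw [if_pos hd]; rw [Finset.mem_Icc] at hd; omega
  · rw [if_neg hd]; rw [Finset.mem_Icc] at hd; omega

private lemma stepA (n l : ℕ) (A B : Finset ℕ) (hdisj : Disjoint A B)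
    (hunion : A ∪ B = Icc 1 (2 * n)) :
    ∑ i ∈ Icc 1 l, (l + 1 - i) * (distPairs A B i).card
      = ∑ u ∈ Icc 1 (2 * n + l),
          (A ∩ Icc (u - l) u).card * (B ∩ Icc (u - l) u).card := by
  have hmem : ∀ x ∈ A ∪ B, 1 ≤ x ∧ x ≤ 2 * n := by
    intro x hx
    rw [hunion, Finset.mem_Icc] at hx
    exact hx
  calc ∑ i ∈ Icc 1 l, (l + 1 - i) * (distPairs A B i).card
      = ∑ i ∈ Icc 1 l, ∑ p ∈ A ×ˢ B,
          (l + 1 - i) * (if max p.1 p.2 - min p.1 p.2 = i then 1 else 0) := by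
        refine Finset.sum_congr rfl fun i _ => ?_
        rw [distPairs_card A B hdisj i, Finset.mul_sum]
    _ = ∑ p ∈ A ×ˢ B, ∑ i ∈ Icc 1 l,
          (l + 1 - i) * (if max p.1 p.2 - min p.1 p.2 = i then 1 else 0) :=
        Finset.sum_comm
    _ = ∑ p ∈ A ×ˢ B, ((Icc 1 (2 * n + l)).filter
          fun u => p.1 ∈ Icc (u - l) u ∧ p.2 ∈ Icc (u - l) u).card := by
        refine Finset.sum_congr rfl fun p hp => ?_
        rw [Finset.mem_product] at hp
        have h1 := hmem p.1 (Finset.mem_union_left _ hp.1)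
        have h2 := hmem p.2 (Finset.mem_union_right _ hp.2)
        have hne : p.1 ≠ p.2 := fun e => Finset.disjoint_left.mp hdisj hp.1 (e ▸ hp.2)
        exact pair_count (2 * n) l p.1 p.2 h1.1 h1.2 h2.1 h2.2 hne
    _ = ∑ p ∈ A ×ˢ B, ∑ u ∈ Icc 1 (2 * n + l),
          (if p.1 ∈ Icc (u - l) u ∧ p.2 ∈ Icc (u - l) u then 1 else 0) := by
        refine Finset.sum_congr rfl fun p _ => ?_
        rw [Finset.card_filter]
    _ = ∑ u ∈ Icc 1 (2 * n + l), ∑ p ∈ A ×ˢ B,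
          (if p.1 ∈ Icc (u - l) u ∧ p.2 ∈ Icc (u - l) u then 1 else 0) :=
        Finset.sum_comm
    _ = ∑ u ∈ Icc 1 (2 * n + l),
          (A ∩ Icc (u - l) u).card * (B ∩ Icc (u - l) u).card := by
        refine Finset.sum_congr rfl fun u _ => ?_
        rw [inter_card_mul]

private lemma stepB (n l u : ℕ) (A B : Finset ℕ) (hdisj : Disjoint A B)
    (hunion : A ∪ B = Icc 1 (2 * n)) :
    (A ∩ Icc (u - l) u).card * (B ∩ Icc (u - l) u).card
      ≤ (min (2 * n) u + 1 - max 1 (u - l)) ^ 2 / 4 := by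
  set W := Icc (u - l) u with hW
  have hdisj' : Disjoint (A ∩ W) (B ∩ W) :=
    hdisj.mono Finset.inter_subset_left Finset.inter_subset_left
  have hpq : (A ∩ W).card + (B ∩ W).card = min (2 * n) u + 1 - max 1 (u - l) := by
    rw [← Finset.card_union_of_disjoint hdisj', ← Finset.union_inter_distrib_right, hunion]
    have h : Icc 1 (2 * n) ∩ W = Icc (max 1 (u - l)) (min (2 * n) u) := by
      ext x
      simp only [Finset.mem_inter, Finset.mem_Icc, hW]
      omega
    rw [h, Nat.card_Icc]
  rw [Nat.le_div_iff_mul_le (by norm_num : 0 < 4)]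
  calc (A ∩ W).card * (B ∩ W).card * 4
      ≤ ((A ∩ W).card + (B ∩ W).card) ^ 2 := by nlinarith [sq_nonneg ((A ∩ W).card - (B ∩ W).card : ℤ)]
    _ = (min (2 * n) u + 1 - max 1 (u - l)) ^ 2 := by rw [hpq]

private lemma sumC (n l : ℕ) (hn : 1 ≤ n) (hl1 : 1 ≤ l) (hl2 : l ≤ 2 * n - 1) :
    ∑ u ∈ Icc 1 (2 * n + l), (min (2 * n) u + 1 - max 1 (u - l)) ^ 2 / 4
      = 2 * Ssum l + (2 * n - l) * ((l + 1) ^ 2 / 4) := by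
  have h1 : Icc 1 (2 * n + l) = Ioc 0 (2 * n + l) := by
    rw [← Finset.Icc_add_one_left_eq_Ioc]; rfl
  rw [h1,
    ← Finset.sum_Ioc_consecutive _ (show 0 ≤ 2 * n by omega) (show 2 * n ≤ 2 * n + l by omega),
    ← Finset.sum_Ioc_consecutive _ (show (0 : ℕ) ≤ l by omega) (show l ≤ 2 * n by omega)]
  have p1 : ∑ u ∈ Ioc 0 l, (min (2 * n) u + 1 - max 1 (u - l)) ^ 2 / 4 = Ssum l := by
    unfold Ssum
    refine Finset.sum_congr rfl fun u hu => ?_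
    rw [Finset.mem_Ioc] at hu
    have h : min (2 * n) u + 1 - max 1 (u - l) = u := by omega
    rw [h]
  have p2 : ∑ u ∈ Ioc l (2 * n), (min (2 * n) u + 1 - max 1 (u - l)) ^ 2 / 4
      = (2 * n - l) * ((l + 1) ^ 2 / 4) := by
    have hterm : ∀ u ∈ Ioc l (2 * n),
        (min (2 * n) u + 1 - max 1 (u - l)) ^ 2 / 4 = (l + 1) ^ 2 / 4 := by
      intro u hu
      rw [Finset.mem_Ioc] at hu
      have h : min (2 * n) u + 1 - max 1 (u - l) = l + 1 := by omega
      rw [h]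
    rw [Finset.sum_congr rfl hterm, Finset.sum_const, Nat.card_Ioc, smul_eq_mul]
  have p3 : ∑ u ∈ Ioc (2 * n) (2 * n + l),
      (min (2 * n) u + 1 - max 1 (u - l)) ^ 2 / 4 = Ssum l := by
    unfold Ssum
    refine Finset.sum_nbij' (fun u => 2 * n + l + 1 - u) (fun v => 2 * n + l + 1 - v)
      ?_ ?_ ?_ ?_ ?_
    · intro u hu; rw [Finset.mem_Ioc] at hu; rw [Finset.mem_Ioc]; omega
    · intro v hv; rw [Finset.mem_Ioc] at hv; rw [Finset.mem_Ioc]; omega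
    · intro u hu; rw [Finset.mem_Ioc] at hu; omega
    · intro v hv; rw [Finset.mem_Ioc] at hv; omega
    · intro u hu; rw [Finset.mem_Ioc] at hu
      have h : min (2 * n) u + 1 - max 1 (u - l) = 2 * n + l + 1 - u := by omega
      rw [h]
  rw [p1, p2, p3]
  ring

private lemma finalC (n l : ℕ) (hn : 1 ≤ n) (hl1 : 1 ≤ l) (hl2 : l ≤ 2 * n - 1) :
    ((2 * Ssum l + (2 * n - l) * ((l + 1) ^ 2 / 4) : ℕ) : ℝ) ≤ cConst n l := by
  have hS := Ssum_formula l
  have hle : l ≤ 2 * n := by omega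
  have h4 : ∀ K : ℕ, (4 * K + 1) / 4 = K := fun K => by omega
  have h4' : ∀ K : ℕ, (4 * K) / 4 = K := fun K => by omega
  rcases Nat.even_or_odd l with ⟨m, hm⟩ | ⟨m, hm⟩
  · have hsq : (l + 1) ^ 2 / 4 = m * m + m := by
      rw [show (l + 1) ^ 2 = 4 * (m * m + m) + 1 from by rw [hm]; ring, h4]
    have hq : (l + 1) / 2 = m := by omega
    rw [hq] at hS
    rw [hsq]
    unfold cConst
    rw [if_pos ⟨m, hm⟩]
    apply le_of_eq
    have hSR : 24 * (Ssum l : ℝ) + 6 * (m : ℝ)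
        = (l : ℝ) * ((l : ℝ) + 1) * (2 * (l : ℝ) + 1) := by exact_mod_cast hS
    have hlR : (l : ℝ) = (m : ℝ) + (m : ℝ) := by exact_mod_cast hm
    push_cast [Nat.cast_sub hle]
    rw [hlR] at hSR ⊢
    linear_combination hSR / 12
  · have hsq : (l + 1) ^ 2 / 4 = (m + 1) * (m + 1) := by
      rw [show (l + 1) ^ 2 = 4 * ((m + 1) * (m + 1)) from by rw [hm]; ring, h4']
    have hq : (l + 1) / 2 = m + 1 := by omega
    rw [hq] at hS
    rw [hsq]
    unfold cConst
    rw [if_neg (by rw [Nat.even_iff]; omega)]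
    apply le_of_eq
    have hSR : 24 * (Ssum l : ℝ) + 6 * ((m : ℝ) + 1)
        = (l : ℝ) * ((l : ℝ) + 1) * (2 * (l : ℝ) + 1) := by exact_mod_cast hS
    have hlR : (l : ℝ) = 2 * (m : ℝ) + 1 := by exact_mod_cast hm
    push_cast [Nat.cast_sub hle]
    rw [hlR] at hSR ⊢
    linear_combination hSR / 12

/-- Let `n ≥ 1`, let `(A,B) ∈ P_{2n}`, and let `l ∈ [2n−1]`.  Then
`Σ_{i=1}^{l} (l+1−i)·|D_{A,B,i}| ≤ c_{2n,l}`. -/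
theorem weighted_distPairs_card_le_cConst
    (n : ℕ) (hn : 1 ≤ n) (A B : Finset ℕ) (hdisj : Disjoint A B)
    (hunion : A ∪ B = Finset.Icc 1 (2 * n))
    (hA : A.card = n) (hB : B.card = n)
    (l : ℕ) (hl1 : 1 ≤ l) (hl2 : l ≤ 2 * n - 1) :
    ∑ i ∈ Finset.Icc 1 l, ((l + 1 - i : ℕ) : ℝ) * ((distPairs A B i).card : ℝ) ≤
      cConst n l := by
  have hcast : (∑ i ∈ Finset.Icc 1 l, ((l + 1 - i : ℕ) : ℝ) * ((distPairs A B i).card : ℝ))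
      = ((∑ i ∈ Icc 1 l, (l + 1 - i) * (distPairs A B i).card : ℕ) : ℝ) := by
    push_cast
    rfl
  rw [hcast]
  have hnat : (∑ i ∈ Icc 1 l, (l + 1 - i) * (distPairs A B i).card)
      ≤ 2 * Ssum l + (2 * n - l) * ((l + 1) ^ 2 / 4) := by
    rw [stepA n l A B hdisj hunion, ← sumC n l hn hl1 hl2]
    exact Finset.sum_le_sum fun u _ => stepB n l u A B hdisj hunion
  calc ((∑ i ∈ Icc 1 l, (l + 1 - i) * (distPairs A B i).card : ℕ) : ℝ)
      ≤ ((2 * Ssum l + (2 * n - l) * ((l + 1) ^ 2 / 4) : ℕ) : ℝ) := by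
        exact_mod_cast hnat
    _ ≤ cConst n l := finalC n l hn hl1 hl2
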